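/- Under the hypotheses H1 and H2' below, the ladder (running maximum from the right) converges in finite-dimensional distribution: for every t ∈ [0,1] with μ({t}) = 0 and every x > 0, P( max_{nt < j ≤ n} X_{n,j} ≤ x ) = ∏_{nt < j ≤ n} P_{n,j}((0,x]) → exp( − μ((t,1]) · γ([x,∞)) ) as n → ∞. -/

import Mathlib

open MeasureTheory Filter

noncomputable def ramp (a δ s : ℝ) : ℝ := min 1 (max 0 ((s - a) / δ))

lemma ramp_cont (a δ : ℝ) : Continuous (ramp a δ) := by
  unfold ramp; fun_prop

lemma ramp_nonneg (a δ s : ℝ) : 0 ≤ ramp a δ s := le_min zero_le_one (le_max_left _ _)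

lemma ramp_le_one (a δ s : ℝ) : ramp a δ s ≤ 1 := min_le_left _ _

lemma ramp_abs_le_one (a δ s : ℝ) : |ramp a δ s| ≤ 1 :=
  abs_le.2 ⟨by linarith [ramp_nonneg a δ s], ramp_le_one a δ s⟩

lemma ramp_eq_zero (a δ s : ℝ) (hδ : 0 < δ) (h : s ≤ a) : ramp a δ s = 0 := by
  unfold ramp
  rw [max_eq_left (div_nonpos_of_nonpos_of_nonneg (by linarith) hδ.le)]
  exact min_eq_right zero_le_one

lemma ramp_eq_one (a δ s : ℝ) (hδ : 0 < δ) (h : a + δ ≤ s) : ramp a δ s = 1 := by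
  unfold ramp
  refine min_eq_left (le_max_iff.2 (Or.inr ?_))
  rw [le_div_iff₀ hδ]; linarith

lemma integrable_of_bounded {μ : Measure ℝ} [IsFiniteMeasure μ] {f : ℝ → ℝ} (hf : Continuous f)
    (C : ℝ) (hC : ∀ s, |f s| ≤ C) : Integrable f μ :=
  (integrable_const C).mono' hf.aestronglyMeasurable
    (Filter.Eventually.of_forall (by simpa [Real.norm_eq_abs] using hC))

lemma integral_le_measure_Ioi {μ : Measure ℝ} [IsFiniteMeasure μ] {f : ℝ → ℝ} (hf : Continuous f)
    (h0 : ∀ s, 0 ≤ f s) (h1 : ∀ s, f s ≤ 1) {a : ℝ} (hz : ∀ s, s ≤ a → f s = 0) :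
    ∫ s, f s ∂μ ≤ (μ (Set.Ioi a)).toReal := by
  have key : ∫ s, f s ∂μ ≤ ∫ s, Set.indicator (Set.Ioi a) (fun _ => (1:ℝ)) s ∂μ := by
    refine integral_mono (integrable_of_bounded hf 1 fun s => abs_le.2 ⟨by linarith [h0 s], h1 s⟩)
      ((integrable_const (1:ℝ)).indicator measurableSet_Ioi) fun s => ?_
    by_cases h : s ∈ Set.Ioi a
    · simpa [Set.indicator_of_mem h] using h1 s
    · simp [Set.indicator_of_notMem h, hz s (not_lt.1 h)]
  rwa [integral_indicator_const _ measurableSet_Ioi, smul_eq_mul, mul_one] at key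

lemma measure_Ioi_le_integral {μ : Measure ℝ} [IsFiniteMeasure μ] {f : ℝ → ℝ} (hf : Continuous f)
    (h0 : ∀ s, 0 ≤ f s) (h1 : ∀ s, f s ≤ 1) {a : ℝ} (ho : ∀ s, a ≤ s → f s = 1) :
    (μ (Set.Ioi a)).toReal ≤ ∫ s, f s ∂μ := by
  have key : ∫ s, Set.indicator (Set.Ioi a) (fun _ => (1:ℝ)) s ∂μ ≤ ∫ s, f s ∂μ := by
    refine integral_mono ((integrable_const (1:ℝ)).indicator measurableSet_Ioi)
      (integrable_of_bounded hf 1 fun s => abs_le.2 ⟨by linarith [h0 s], h1 s⟩) fun s => ?_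
    by_cases h : s ∈ Set.Ioi a
    · rw [Set.indicator_of_mem h, ho s (le_of_lt h)]
    · simpa [Set.indicator_of_notMem h] using h0 s
  rwa [integral_indicator_const _ measurableSet_Ioi, smul_eq_mul, mul_one] at key

lemma log_one_sub_bound {p : ℝ} (h0 : 0 ≤ p) (h2 : p ≤ 1/2) :
    |Real.log (1 - p) + p| ≤ 2 * p ^ 2 := by
  have hp1 : (0:ℝ) < 1 - p := by linarith
  have hu : Real.log (1 - p) ≤ -p := by
    have := Real.log_le_sub_one_of_pos hp1; linarith
  have hl : -(p / (1 - p)) ≤ Real.log (1 - p) := by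
    have h2' : (0:ℝ) < (1 - p)⁻¹ := by positivity
    have h3 := Real.log_le_sub_one_of_pos h2'
    rw [Real.log_inv] at h3
    have heq : (1 - p)⁻¹ - 1 = p / (1 - p) := by field_simp; ring
    linarith
  have hq : p / (1 - p) ≤ p + 2 * p ^ 2 := by
    rw [div_le_iff₀ hp1]; nlinarith
  rw [abs_le]; constructor <;> nlinarith

lemma prod_one_sub_tendsto_exp {p : ℕ → ℕ → ℝ} {F : ℕ → Finset ℕ} {L : ℝ}
    (hp0 : ∀ n, ∀ j ∈ F n, 0 ≤ p n j)
    (hsum : Tendsto (fun n => ∑ j ∈ F n, p n j) atTop (nhds L))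
    (hsmall : ∀ ε : ℝ, 0 < ε → ∀ᶠ n in atTop, ∀ j ∈ F n, p n j ≤ ε) :
    Tendsto (fun n => ∏ j ∈ F n, (1 - p n j)) atTop (nhds (Real.exp (-L))) := by
  set S : ℕ → ℝ := fun n => ∑ j ∈ F n, p n j with hS
  have hS0 : ∀ n, 0 ≤ S n := fun n => Finset.sum_nonneg (hp0 n)
  have hL0 : 0 ≤ L := le_of_tendsto_of_tendsto' tendsto_const_nhds hsum fun n => hS0 n
  have hR : Tendsto (fun n => (∑ j ∈ F n, Real.log (1 - p n j)) + S n) atTop (nhds 0) := by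
    rw [NormedAddCommGroup.tendsto_nhds_zero]
    intro ε hε
    have hβpos : 0 < min (1/2) (ε / (2 * (L + 2))) := by positivity
    have hev1 := hsmall _ hβpos
    have hev2 : ∀ᶠ n in atTop, S n ≤ L + 1 := by
      have := hsum (Iio_mem_nhds (by linarith : L < L + 1))
      filter_upwards [this] with n hn using le_of_lt hn
    filter_upwards [hev1, hev2] with n hn hSn
    set β := min (1/2) (ε / (2 * (L + 2))) with hβ
    have hkey : ‖(∑ j ∈ F n, Real.log (1 - p n j)) + S n‖ ≤ 2 * β * S n := by
      rw [hS, ← Finset.sum_add_distrib, Real.norm_eq_abs]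
      calc |∑ j ∈ F n, (Real.log (1 - p n j) + p n j)|
          ≤ ∑ j ∈ F n, |Real.log (1 - p n j) + p n j| := Finset.abs_sum_le_sum_abs _ _
        _ ≤ ∑ j ∈ F n, 2 * β * p n j := by
            refine Finset.sum_le_sum fun j hj => ?_
            have h1 := hp0 n j hj
            have h2 := hn j hj
            have h3 : p n j ≤ 1/2 := le_trans h2 (min_le_left _ _)
            calc |Real.log (1 - p n j) + p n j| ≤ 2 * p n j ^ 2 := log_one_sub_bound h1 h3
              _ ≤ 2 * β * p n j := by nlinarith
        _ = 2 * β * S n := by rw [hS, Finset.mul_sum]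
    have hβle : β ≤ ε / (2 * (L + 2)) := min_le_right _ _
    have hmid : 2 * β * S n ≤ 2 * (ε / (2 * (L + 2))) * (L + 1) := by
      have hβ0 : 0 ≤ β := le_of_lt hβpos
      have := hS0 n
      nlinarith
    have hlt : 2 * (ε / (2 * (L + 2))) * (L + 1) < ε := by
      have h2 : (0:ℝ) < L + 2 := by linarith
      rw [show 2 * (ε / (2 * (L + 2))) * (L + 1) = ε * ((L + 1) / (L + 2)) by field_simp]
      calc ε * ((L + 1) / (L + 2)) < ε * 1 := by
            refine mul_lt_mul_of_pos_left ?_ hε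
            rw [div_lt_one h2]; linarith
        _ = ε := mul_one ε
    calc ‖_ + S n‖ ≤ 2 * β * S n := hkey
      _ ≤ _ := hmid
      _ < ε := hlt
  have hT : Tendsto (fun n => ∑ j ∈ F n, Real.log (1 - p n j)) atTop (nhds (-L)) := by
    have := hR.sub hsum
    simpa using this
  have hev := hsmall (1/2) (by norm_num)
  have hexp : Tendsto (fun n => Real.exp (∑ j ∈ F n, Real.log (1 - p n j))) atTop
      (nhds (Real.exp (-L))) := (Real.continuous_exp.continuousAt).tendsto.comp hT
  refine hexp.congr' ?_
  filter_upwards [hev] with n hn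
  rw [Real.exp_sum]
  refine Finset.prod_congr rfl fun j hj => ?_
  have : (0:ℝ) < 1 - p n j := by have := hn j hj; linarith
  rw [Real.exp_log this]

/-- Under hypotheses H1 and H2', the ladder (running maximum from the right)
converges in finite-dimensional distribution: for every `t ∈ [0,1]` with
`μ({t}) = 0` and every `x > 0`,
`P(max_{nt < j ≤ n} X_{n,j} ≤ x) = ∏_{nt < j ≤ n} P_{n,j}((0,x]) → exp(-μ((t,1])·γ([x,∞)))`. -/
theorem ladder_converges_in_fdd
    (Ω : Type*) [MeasurableSpace Ω] (Pr : Measure Ω) [IsProbabilityMeasure Pr]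
    (X : ℕ → ℕ → Ω → ℝ)
    (hXmeas : ∀ n j, 1 ≤ j → j ≤ n → Measurable (X n j))
    (hXpos : ∀ n j, 1 ≤ j → j ≤ n → ∀ ω, 0 < X n j ω)
    -- for each `n`, the variables `X n 1, …, X n n` are independent
    (hindep : ∀ n, ProbabilityTheory.iIndepFun
      (m := fun _ : ↥(Finset.Icc 1 n) => (inferInstance : MeasurableSpace ℝ))
      (fun j : ↥(Finset.Icc 1 n) => X n j) Pr)
    -- `P n j` is the (nonatomic, supported on `(0,∞)`) distribution of `X n j`
    (P : ℕ → ℕ → Measure ℝ)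
    (hPdist : ∀ n j, 1 ≤ j → j ≤ n → Measure.map (X n j) Pr = P n j)
    (hPprob : ∀ n j, 1 ≤ j → j ≤ n → IsProbabilityMeasure (P n j))
    (hPpos : ∀ n j, 1 ≤ j → j ≤ n → P n j (Set.Iic 0) = 0)
    (hPna : ∀ n j, 1 ≤ j → j ≤ n → ∀ x : ℝ, P n j {x} = 0)
    (c : ℕ → ℕ → ℝ) (d : ℕ → ℝ)
    (hc : ∀ n j, 1 ≤ j → j ≤ n → 0 < c n j)
    (hd : ∀ n, d n = ∑ j ∈ Finset.Icc 1 n, c n j)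
    -- H1 : `d n → ∞` and `(max_{j ≤ n} c n j) / d n → 0`
    (hdtop : Tendsto d atTop atTop)
    (hmax : ∀ ε : ℝ, 0 < ε → ∃ N, ∀ n ≥ N, ∀ j ∈ Finset.Icc 1 n, c n j / d n < ε)
    -- H1 : the measures `μ_n = ∑_j (c n j / d n) δ_{j/n}` converge weakly to `μ`
    (μ : Measure ℝ)
    (hμsupp : μ ((Set.Icc (0:ℝ) 1)ᶜ) = 0)
    (hweak : ∀ f : ℝ → ℝ, Continuous f → (∃ C, ∀ x, |f x| ≤ C) →
      Tendsto (fun n => ∫ x, f x ∂(∑ j ∈ Finset.Icc 1 n,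
          ENNReal.ofReal (c n j / d n) • Measure.dirac ((j : ℝ) / (n : ℝ))))
        atTop (nhds (∫ x, f x ∂μ)))
    -- H2' : `γ` nonatomic, finite on half-lines, uniform convergence of scaled tails
    (γ : Measure ℝ)
    (hγ0 : γ (Set.Iic 0) = 0)
    (hγna : ∀ x : ℝ, 0 < x → γ {x} = 0)
    (hγfin : ∀ t : ℝ, 0 < t → γ (Set.Ici t) ≠ ⊤)
    (hunif : ∀ t : ℝ, 0 < t → ∀ ε : ℝ, 0 < ε → ∃ N, ∀ n ≥ N, ∀ j ∈ Finset.Icc 1 n,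
      |d n / c n j * (P n j (Set.Ici t)).toReal - (γ (Set.Ici t)).toReal| < ε) :
    ∀ t ∈ Set.Icc (0:ℝ) 1, μ {t} = 0 → ∀ x : ℝ, 0 < x →
      (∀ n : ℕ, (Pr {ω | ∀ j ∈ Finset.Icc 1 n, (n : ℝ) * t < (j : ℝ) → X n j ω ≤ x}).toReal
        = ∏ j ∈ (Finset.Icc 1 n).filter (fun j : ℕ => (n : ℝ) * t < (j : ℝ)),
            (P n j (Set.Ioc 0 x)).toReal) ∧
      Tendsto (fun n : ℕ => ∏ j ∈ (Finset.Icc 1 n).filter (fun j : ℕ => (n : ℝ) * t < (j : ℝ)),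
          (P n j (Set.Ioc 0 x)).toReal)
        atTop (nhds (Real.exp (-((μ (Set.Ioc t 1)).toReal * (γ (Set.Ici x)).toReal)))) := by
  intro t ht hμt x hx
  classical
  -- per-index measure identities
  have key : ∀ n j, 1 ≤ j → j ≤ n →
      P n j (Set.Iic x) = P n j (Set.Ioc 0 x) ∧
      P n j (Set.Ioc 0 x) = 1 - P n j (Set.Ici x) := by
    intro n j h1 h2
    haveI := hPprob n j h1 h2
    have hIic : P n j (Set.Iic x) = P n j (Set.Ioc 0 x) := by
      rw [← Set.Iic_union_Ioc_eq_Iic hx.le,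
        measure_union (Set.Iic_disjoint_Ioc le_rfl) measurableSet_Ioc,
        hPpos n j h1 h2, zero_add]
    have hIci : P n j (Set.Ici x) = P n j (Set.Ioi x) := by
      have hs : Set.Ici x = {x} ∪ Set.Ioi x := by
        ext s
        simp only [Set.mem_Ici, Set.mem_union, Set.mem_singleton_iff, Set.mem_Ioi]
        constructor
        · intro h; rcases eq_or_lt_of_le h with h | h
          · exact Or.inl h.symm
          · exact Or.inr h
        · rintro (rfl | h) <;> [exact le_rfl; exact h.le]
      rw [hs, measure_union (by simp) measurableSet_Ioi, hPna n j h1 h2 x, zero_add]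
    have hIicc : P n j (Set.Iic x) = 1 - P n j (Set.Ioi x) := by
      rw [← Set.compl_Ioi, prob_compl_eq_one_sub measurableSet_Ioi]
    exact ⟨hIic, by rw [← hIic, hIicc, hIci]⟩
  have keyR : ∀ n j, 1 ≤ j → j ≤ n →
      (P n j (Set.Ioc 0 x)).toReal = 1 - (P n j (Set.Ici x)).toReal := by
    intro n j h1 h2
    haveI := hPprob n j h1 h2
    rw [(key n j h1 h2).2, ENNReal.toReal_sub_of_le prob_le_one ENNReal.one_ne_top,
      ENNReal.toReal_one]
  -- Part 1 : product formula from independence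
  have part1 : ∀ n : ℕ,
      Pr {ω | ∀ j ∈ Finset.Icc 1 n, (n : ℝ) * t < (j : ℝ) → X n j ω ≤ x}
        = ∏ j ∈ (Finset.Icc 1 n).filter (fun j : ℕ => (n : ℝ) * t < (j : ℝ)),
            P n j (Set.Ioc 0 x) := by
    intro n
    set S' : Finset ↥(Finset.Icc 1 n) :=
      Finset.univ.filter (fun j : ↥(Finset.Icc 1 n) => (n : ℝ) * t < ((j : ℕ) : ℝ)) with hS'
    have hset : {ω | ∀ j ∈ Finset.Icc 1 n, (n : ℝ) * t < (j : ℝ) → X n j ω ≤ x}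
        = ⋂ j ∈ S', (fun i : ↥(Finset.Icc 1 n) => X n i) j ⁻¹' Set.Iic x := by
      ext ω
      simp only [Set.mem_setOf_eq, Set.mem_iInter, Set.mem_preimage, Set.mem_Iic,
        hS', Finset.mem_filter, Finset.mem_univ, true_and]
      constructor
      · intro h a ha; exact h a.1 a.2 ha
      · intro h j hj hjt; exact h ⟨j, hj⟩ hjt
    have hmeas := (hindep n).measure_inter_preimage_eq_mul (sets := fun _ => Set.Iic x) S'
      (fun i _ => measurableSet_Iic)
    rw [hset, hmeas]
    refine Finset.prod_bij (fun (a : ↥(Finset.Icc 1 n)) (_ : a ∈ S') => (a : ℕ)) ?_ ?_ ?_ ?_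
    · intro a ha
      rw [Finset.mem_filter]
      exact ⟨a.2, (Finset.mem_filter.1 ha).2⟩
    · intro a₁ _ a₂ _ h
      exact Subtype.ext h
    · intro b hb
      obtain ⟨hb1, hb2⟩ := Finset.mem_filter.1 hb
      exact ⟨⟨b, hb1⟩, Finset.mem_filter.2 ⟨Finset.mem_univ _, hb2⟩, rfl⟩
    · intro a _
      obtain ⟨h1, h2⟩ := Finset.mem_Icc.1 a.2
      rw [← (key n a h1 h2).1, ← hPdist n a h1 h2,
        Measure.map_apply (hXmeas n a h1 h2) measurableSet_Iic]
  refine ⟨fun n => by rw [part1 n, ENNReal.toReal_prod], ?_⟩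

  -- Part 2 : convergence
  -- basic positivity facts
  have hd_pos : ∀ n : ℕ, 1 ≤ n → 0 < d n := by
    intro n hn
    rw [hd]
    exact Finset.sum_pos (fun j hj => hc n j (Finset.mem_Icc.1 hj).1 (Finset.mem_Icc.1 hj).2)
      ⟨1, Finset.mem_Icc.2 ⟨le_rfl, hn⟩⟩
  have ha_pos : ∀ n j, j ∈ Finset.Icc 1 n → 0 < c n j / d n := by
    intro n j hj
    obtain ⟨h1, h2⟩ := Finset.mem_Icc.1 hj
    exact div_pos (hc n j h1 h2) (hd_pos n (le_trans h1 h2))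
  have hsum_a : ∀ n : ℕ, 1 ≤ n → ∑ j ∈ Finset.Icc 1 n, c n j / d n = 1 := by
    intro n hn
    rw [← Finset.sum_div, ← hd, div_self (hd_pos n hn).ne']
  -- integrals against the discrete measures
  have hν : ∀ n : ℕ, 1 ≤ n → ∀ f : ℝ → ℝ,
      (∫ s, f s ∂(∑ j ∈ Finset.Icc 1 n,
          ENNReal.ofReal (c n j / d n) • Measure.dirac ((j : ℝ) / (n : ℝ))))
        = ∑ j ∈ Finset.Icc 1 n, (c n j / d n) * f ((j : ℝ) / (n : ℝ)) := by
    intro n hn f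
    have hint : ∀ j ∈ Finset.Icc 1 n,
        Integrable f (ENNReal.ofReal (c n j / d n) • Measure.dirac ((j : ℝ) / (n : ℝ))) := by
      intro j hj
      refine Integrable.smul_measure ?_ ENNReal.ofReal_ne_top
      refine (integrable_const (f ((j : ℝ) / (n : ℝ)))).congr ?_
      rw [Filter.EventuallyEq, ae_dirac_eq]
      exact Filter.eventually_pure.2 rfl
    rw [integral_finset_sum_measure hint]
    refine Finset.sum_congr rfl fun j hj => ?_
    rw [integral_smul_measure, integral_dirac, smul_eq_mul,
      ENNReal.toReal_ofReal (ha_pos n j hj).le]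
  -- μ is a finite measure
  haveI hμfin : IsFiniteMeasure μ := by
    have h1 := hweak (fun _ => (1:ℝ)) continuous_const ⟨1, fun s => by norm_num⟩
    have h2 : Tendsto (fun _ : ℕ => (1:ℝ)) atTop (nhds (∫ s, (1:ℝ) ∂μ)) := by
      refine Tendsto.congr' ?_ h1
      filter_upwards [eventually_ge_atTop 1] with n hn
      rw [hν n hn (fun _ => (1:ℝ))]
      simpa using hsum_a n hn
    have h3 : ∫ s, (1:ℝ) ∂μ = 1 := tendsto_nhds_unique h2 tendsto_const_nhds
    rw [integral_const, smul_eq_mul, mul_one] at h3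
    refine ⟨lt_top_iff_ne_top.2 fun h => ?_⟩
    rw [Measure.real, h] at h3
    simp at h3
  -- the limit measure gives no mass beyond 1
  have hμIoi : μ (Set.Ioi t) = μ (Set.Ioc t 1) := by
    have h1 : μ (Set.Ioi (1:ℝ)) = 0 := by
      refine measure_mono_null (fun s hs => ?_) hμsupp
      simp only [Set.mem_compl_iff, Set.mem_Icc, not_and, not_le]
      intro _
      exact Set.mem_Ioi.1 hs
    rw [← Set.Ioc_union_Ioi_eq_Ioi ht.2]
    refine le_antisymm ?_ (measure_mono Set.subset_union_left)
    calc μ (Set.Ioc t 1 ∪ Set.Ioi 1) ≤ μ (Set.Ioc t 1) + μ (Set.Ioi 1) := measure_union_le _ _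
      _ = μ (Set.Ioc t 1) := by rw [h1, add_zero]
  -- choice of δ using μ {t} = 0 and continuity from above
  have hδsel : ∀ ε : ℝ, 0 < ε → ∃ δ : ℝ, 0 < δ ∧
      (μ (Set.Ioi (t - δ))).toReal < (μ (Set.Ioi t)).toReal + ε ∧
      (μ (Set.Ioi t)).toReal - ε < (μ (Set.Ioi (t + δ))).toReal := by
    intro ε hε
    have hmono : ∀ k l : ℕ, k ≤ l → (1:ℝ)/((l:ℝ)+1) ≤ 1/((k:ℝ)+1) := by
      intro k l hkl
      apply one_div_le_one_div_of_le (by positivity)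
      have : (k:ℝ) ≤ (l:ℝ) := by exact_mod_cast hkl
      linarith
    have htend1 : Tendsto (fun k : ℕ => μ (Set.Ioc (t - 1/((k:ℝ)+1)) t)) atTop (nhds 0) := by
      have hanti : Antitone (fun k : ℕ => Set.Ioc (t - 1/((k:ℝ)+1)) t) := by
        intro k l hkl
        refine Set.Ioc_subset_Ioc_left ?_
        have := hmono k l hkl
        linarith
      have hint : (⋂ k : ℕ, Set.Ioc (t - 1/((k:ℝ)+1)) t) = {t} := by
        ext s
        simp only [Set.mem_iInter, Set.mem_Ioc, Set.mem_singleton_iff]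
        constructor
        · intro h
          have hle : s ≤ t := (h 0).2
          have hge : t ≤ s := by
            by_contra hlt
            push_neg at hlt
            obtain ⟨k, hk⟩ := exists_nat_one_div_lt (by linarith : (0:ℝ) < t - s)
            have := (h k).1
            linarith
          exact le_antisymm hle hge
        · rintro rfl
          intro k
          have : (0:ℝ) < 1/((k:ℝ)+1) := by positivity
          exact ⟨by linarith, le_rfl⟩
      have hlim := tendsto_measure_iInter_atTop
        (fun k : ℕ => measurableSet_Ioc.nullMeasurableSet) hanti ⟨0, measure_ne_top μ _⟩
      rw [hint, hμt] at hlim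
      exact hlim
    have htend2 : Tendsto (fun k : ℕ => μ (Set.Ioc t (t + 1/((k:ℝ)+1)))) atTop (nhds 0) := by
      have hanti : Antitone (fun k : ℕ => Set.Ioc t (t + 1/((k:ℝ)+1))) := by
        intro k l hkl
        refine Set.Ioc_subset_Ioc_right ?_
        have := hmono k l hkl
        linarith
      have hint : (⋂ k : ℕ, Set.Ioc t (t + 1/((k:ℝ)+1))) = ∅ := by
        rw [Set.eq_empty_iff_forall_notMem]
        intro s hs
        simp only [Set.mem_iInter, Set.mem_Ioc] at hs
        have h0 : t < s := (hs 0).1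
        obtain ⟨k, hk⟩ := exists_nat_one_div_lt (by linarith : (0:ℝ) < s - t)
        have := (hs k).2
        linarith
      have hlim := tendsto_measure_iInter_atTop
        (fun k : ℕ => measurableSet_Ioc.nullMeasurableSet) hanti ⟨0, measure_ne_top μ _⟩
      rw [hint, measure_empty] at hlim
      exact hlim
    have hev1 := htend1.eventually_lt_const (ENNReal.ofReal_pos.2 hε)
    have hev2 := htend2.eventually_lt_const (ENNReal.ofReal_pos.2 hε)
    obtain ⟨k, hk1, hk2⟩ := (hev1.and hev2).exists
    have hδpos : (0:ℝ) < 1/((k:ℝ)+1) := by positivity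
    refine ⟨1/((k:ℝ)+1), hδpos, ?_, ?_⟩
    · have hsplit : μ (Set.Ioi (t - 1/((k:ℝ)+1)))
          = μ (Set.Ioc (t - 1/((k:ℝ)+1)) t) + μ (Set.Ioi t) := by
        rw [← Set.Ioc_union_Ioi_eq_Ioi (by linarith : t - 1/((k:ℝ)+1) ≤ t),
          measure_union (Set.Ioc_disjoint_Ioi le_rfl) measurableSet_Ioi]
      rw [hsplit, ENNReal.toReal_add (measure_ne_top μ _) (measure_ne_top μ _)]
      have := ENNReal.toReal_lt_of_lt_ofReal hk1
      linarith
    · have hsplit : μ (Set.Ioi t)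
          = μ (Set.Ioc t (t + 1/((k:ℝ)+1))) + μ (Set.Ioi (t + 1/((k:ℝ)+1))) := by
        rw [← Set.Ioc_union_Ioi_eq_Ioi (by linarith : t ≤ t + 1/((k:ℝ)+1)),
          measure_union (Set.Ioc_disjoint_Ioi le_rfl) measurableSet_Ioi]
      rw [hsplit, ENNReal.toReal_add (measure_ne_top μ _) (measure_ne_top μ _)]
      have := ENNReal.toReal_lt_of_lt_ofReal hk2
      linarith
  -- portmanteau : the weights over the ladder converge to μ((t,1])
  have hA : Tendsto (fun n : ℕ => ∑ j ∈ (Finset.Icc 1 n).filter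
      (fun j : ℕ => (n : ℝ) * t < (j : ℝ)), c n j / d n) atTop
      (nhds ((μ (Set.Ioc t 1)).toReal)) := by
    rw [Metric.tendsto_atTop]
    intro ε hε
    obtain ⟨δ, hδ0, hub, hlb⟩ := hδsel (ε/4) (by linarith)
    have hw1 := hweak (ramp t δ) (ramp_cont t δ) ⟨1, ramp_abs_le_one t δ⟩
    have hw2 := hweak (ramp (t - δ) δ) (ramp_cont _ δ) ⟨1, ramp_abs_le_one _ δ⟩
    rw [Metric.tendsto_atTop] at hw1 hw2
    obtain ⟨N1, hN1⟩ := hw1 (ε/4) (by linarith)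
    obtain ⟨N2, hN2⟩ := hw2 (ε/4) (by linarith)
    refine ⟨max (max N1 N2) 1, fun n hn => ?_⟩
    have hn1 : 1 ≤ n := le_trans (le_max_right _ _) hn
    have hnN1 : N1 ≤ n := le_trans (le_trans (le_max_left _ _) (le_max_left _ _)) hn
    have hnN2 : N2 ≤ n := le_trans (le_trans (le_max_right _ _) (le_max_left _ _)) hn
    have hn0 : (0:ℝ) < (n:ℝ) := by exact_mod_cast hn1
    have hlow : ∑ j ∈ Finset.Icc 1 n, (c n j / d n) * ramp t δ ((j:ℝ)/(n:ℝ))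
        ≤ ∑ j ∈ (Finset.Icc 1 n).filter (fun j : ℕ => (n : ℝ) * t < (j : ℝ)), c n j / d n := by
      rw [Finset.sum_filter]
      refine Finset.sum_le_sum fun j hj => ?_
      by_cases hcnd : (n : ℝ) * t < (j : ℝ)
      · rw [if_pos hcnd]
        have h1 := ramp_le_one t δ ((j:ℝ)/(n:ℝ))
        have h2 := ramp_nonneg t δ ((j:ℝ)/(n:ℝ))
        have h3 := (ha_pos n j hj).le
        nlinarith
      · rw [if_neg hcnd]
        have hz : ramp t δ ((j:ℝ)/(n:ℝ)) = 0 := by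
          refine ramp_eq_zero t δ _ hδ0 ?_
          rw [div_le_iff₀ hn0]
          push_neg at hcnd
          linarith [mul_comm t (n:ℝ), hcnd]
        rw [hz, mul_zero]
    have hupp : ∑ j ∈ (Finset.Icc 1 n).filter (fun j : ℕ => (n : ℝ) * t < (j : ℝ)), c n j / d n
        ≤ ∑ j ∈ Finset.Icc 1 n, (c n j / d n) * ramp (t - δ) δ ((j:ℝ)/(n:ℝ)) := by
      rw [Finset.sum_filter]
      refine Finset.sum_le_sum fun j hj => ?_
      by_cases hcnd : (n : ℝ) * t < (j : ℝ)
      · rw [if_pos hcnd]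
        have hone : ramp (t - δ) δ ((j:ℝ)/(n:ℝ)) = 1 := by
          refine ramp_eq_one _ δ _ hδ0 ?_
          have htle : t ≤ (j:ℝ)/(n:ℝ) := by
            rw [le_div_iff₀ hn0]
            linarith [mul_comm t (n:ℝ)]
          linarith
        rw [hone, mul_one]
      · rw [if_neg hcnd]
        exact mul_nonneg (ha_pos n j hj).le (ramp_nonneg _ _ _)
    have hi1 := hν n hn1 (ramp t δ)
    have hi2 := hν n hn1 (ramp (t - δ) δ)
    have hd1 := hN1 n hnN1
    have hd2 := hN2 n hnN2
    rw [Real.dist_eq, hi1] at hd1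
    rw [Real.dist_eq, hi2] at hd2
    have habs1 := abs_lt.1 hd1
    have habs2 := abs_lt.1 hd2
    have hμ1 : (μ (Set.Ioi (t + δ))).toReal ≤ ∫ s, ramp t δ s ∂μ :=
      measure_Ioi_le_integral (ramp_cont t δ) (ramp_nonneg t δ) (ramp_le_one t δ)
        (fun s hs => ramp_eq_one t δ s hδ0 hs)
    have hμ2 : ∫ s, ramp (t - δ) δ s ∂μ ≤ (μ (Set.Ioi (t - δ))).toReal :=
      integral_le_measure_Ioi (ramp_cont _ δ) (ramp_nonneg _ δ) (ramp_le_one _ δ)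
        (fun s hs => ramp_eq_zero _ δ s hδ0 hs)
    rw [Real.dist_eq, ← hμIoi, abs_lt]
    constructor <;> linarith
  -- the sum of tail probabilities converges to μ((t,1]) γ([x,∞))
  have hgnn : (0:ℝ) ≤ (γ (Set.Ici x)).toReal := ENNReal.toReal_nonneg
  have hsump : Tendsto (fun n : ℕ => ∑ j ∈ (Finset.Icc 1 n).filter
      (fun j : ℕ => (n : ℝ) * t < (j : ℝ)), (P n j (Set.Ici x)).toReal) atTop
      (nhds ((μ (Set.Ioc t 1)).toReal * (γ (Set.Ici x)).toReal)) := by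
    have hE : Tendsto (fun n : ℕ =>
        (∑ j ∈ (Finset.Icc 1 n).filter (fun j : ℕ => (n : ℝ) * t < (j : ℝ)),
          (P n j (Set.Ici x)).toReal)
        - (γ (Set.Ici x)).toReal * ∑ j ∈ (Finset.Icc 1 n).filter
            (fun j : ℕ => (n : ℝ) * t < (j : ℝ)), c n j / d n) atTop (nhds 0) := by
      rw [NormedAddCommGroup.tendsto_nhds_zero]
      intro ε hε
      obtain ⟨N, hN⟩ := hunif x hx (ε/2) (by linarith)
      filter_upwards [eventually_ge_atTop (max N 1)] with n hn
      have hnN : N ≤ n := le_trans (le_max_left _ _) hn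
      have hn1 : 1 ≤ n := le_trans (le_max_right _ _) hn
      have keyj : ∀ j ∈ (Finset.Icc 1 n).filter (fun j : ℕ => (n : ℝ) * t < (j : ℝ)),
          |(P n j (Set.Ici x)).toReal - (γ (Set.Ici x)).toReal * (c n j / d n)|
            ≤ (c n j / d n) * (ε/2) := by
        intro j hj
        have hj' := (Finset.mem_filter.1 hj).1
        obtain ⟨h1, h2⟩ := Finset.mem_Icc.1 hj'
        have h := hN n hnN j hj'
        have hcp := hc n j h1 h2
        have hdp := hd_pos n hn1
        have hid : (P n j (Set.Ici x)).toReal - (γ (Set.Ici x)).toReal * (c n j / d n)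
            = (c n j / d n) * (d n / c n j * (P n j (Set.Ici x)).toReal
              - (γ (Set.Ici x)).toReal) := by
          field_simp
        rw [hid, abs_mul, abs_of_nonneg (ha_pos n j hj').le]
        exact mul_le_mul_of_nonneg_left h.le (ha_pos n j hj').le
      have hsle : ∑ j ∈ (Finset.Icc 1 n).filter (fun j : ℕ => (n : ℝ) * t < (j : ℝ)),
          c n j / d n ≤ 1 := by
        rw [← hsum_a n hn1]
        exact Finset.sum_le_sum_of_subset_of_nonneg (Finset.filter_subset _ _)
          (fun j hj _ => (ha_pos n j hj).le)
      calc ‖(∑ j ∈ (Finset.Icc 1 n).filter (fun j : ℕ => (n : ℝ) * t < (j : ℝ)),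
              (P n j (Set.Ici x)).toReal)
            - (γ (Set.Ici x)).toReal * ∑ j ∈ (Finset.Icc 1 n).filter
                (fun j : ℕ => (n : ℝ) * t < (j : ℝ)), c n j / d n‖
          = |∑ j ∈ (Finset.Icc 1 n).filter (fun j : ℕ => (n : ℝ) * t < (j : ℝ)),
              ((P n j (Set.Ici x)).toReal - (γ (Set.Ici x)).toReal * (c n j / d n))| := by
            rw [Real.norm_eq_abs, Finset.mul_sum, ← Finset.sum_sub_distrib]
        _ ≤ ∑ j ∈ (Finset.Icc 1 n).filter (fun j : ℕ => (n : ℝ) * t < (j : ℝ)),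
              |(P n j (Set.Ici x)).toReal - (γ (Set.Ici x)).toReal * (c n j / d n)| :=
            Finset.abs_sum_le_sum_abs _ _
        _ ≤ ∑ j ∈ (Finset.Icc 1 n).filter (fun j : ℕ => (n : ℝ) * t < (j : ℝ)),
              (c n j / d n) * (ε/2) := Finset.sum_le_sum keyj
        _ = (∑ j ∈ (Finset.Icc 1 n).filter (fun j : ℕ => (n : ℝ) * t < (j : ℝ)),
              c n j / d n) * (ε/2) := (Finset.sum_mul _ _ _).symm
        _ ≤ 1 * (ε/2) := mul_le_mul_of_nonneg_right hsle (by linarith)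
        _ < ε := by linarith
    have hcomb := hE.add (hA.const_mul ((γ (Set.Ici x)).toReal))
    rw [zero_add] at hcomb
    rw [mul_comm]
    refine hcomb.congr fun n => ?_
    ring
  -- the tail probabilities are uniformly small
  have hsmall : ∀ ε : ℝ, 0 < ε → ∀ᶠ n : ℕ in atTop, ∀ j ∈ (Finset.Icc 1 n).filter
      (fun j : ℕ => (n : ℝ) * t < (j : ℝ)), (P n j (Set.Ici x)).toReal ≤ ε := by
    intro ε hε
    obtain ⟨N1, hN1⟩ := hunif x hx 1 one_pos
    obtain ⟨N2, hN2⟩ := hmax (ε / ((γ (Set.Ici x)).toReal + 1)) (by positivity)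
    filter_upwards [eventually_ge_atTop (max (max N1 N2) 1)] with n hn
    intro j hj
    have hj' := (Finset.mem_filter.1 hj).1
    obtain ⟨hj1, hj2⟩ := Finset.mem_Icc.1 hj'
    have hn1 : 1 ≤ n := le_trans (le_max_right _ _) hn
    have h1 := hN1 n (le_trans (le_trans (le_max_left _ _) (le_max_left _ _)) hn) j hj'
    have h2 := hN2 n (le_trans (le_trans (le_max_right _ _) (le_max_left _ _)) hn) j hj'
    have hcp := hc n j hj1 hj2
    have hdp := hd_pos n hn1
    have hpid : (P n j (Set.Ici x)).toReal
        = (c n j / d n) * (d n / c n j * (P n j (Set.Ici x)).toReal) := by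
      field_simp
    rw [hpid]
    have hb : d n / c n j * (P n j (Set.Ici x)).toReal < (γ (Set.Ici x)).toReal + 1 := by
      have := abs_lt.1 h1
      linarith
    have hbnn : (0:ℝ) ≤ d n / c n j * (P n j (Set.Ici x)).toReal := by positivity
    calc (c n j / d n) * (d n / c n j * (P n j (Set.Ici x)).toReal)
        ≤ (c n j / d n) * ((γ (Set.Ici x)).toReal + 1) :=
          mul_le_mul_of_nonneg_left hb.le (by positivity)
      _ ≤ (ε / ((γ (Set.Ici x)).toReal + 1)) * ((γ (Set.Ici x)).toReal + 1) :=
          mul_le_mul_of_nonneg_right h2.le (by positivity)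
      _ = ε := by field_simp
  -- conclude
  have hfinal := prod_one_sub_tendsto_exp
    (p := fun n j => (P n j (Set.Ici x)).toReal)
    (F := fun n : ℕ => (Finset.Icc 1 n).filter (fun j : ℕ => (n : ℝ) * t < (j : ℝ)))
    (fun n j _ => ENNReal.toReal_nonneg) hsump hsmall
  refine hfinal.congr fun n => ?_
  refine Finset.prod_congr rfl fun j hj => ?_
  obtain ⟨h1, h2⟩ := Finset.mem_Icc.1 (Finset.mem_filter.1 hj).1
  exact (keyR n j h1 h2).symm
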